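/- Let r ≥ 1 and let V̂ : ℤ³ → ℝ satisfy V̂(k) = 0 for |k| > r, V̂(−k) = V̂(k), and V̂(0) = 0. There exists a constant C > 0, depending only on r and V̂, such that for every p_F > 0 and every f : ℤ³ → ℝ with 0 ≤ f ≤ 1 and ∑_{p∈ℤ³} f(p) < ∞, one has sup_{p∈ℤ³} |𝒬[f](p)| ≤ C·∑_{p∈ℤ³} f(p). -/

import Mathlib

open Real

/-- The Euclidean norm of a lattice point in `ℤ^d`. -/
noncomputable def zNorm {d : ℕ} (p : Fin d → ℤ) : ℝ := Real.sqrt (∑ i, ((p i : ℝ)) ^ 2)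

/-- The indicator `χ` of the Fermi ball of radius `p_F`. -/
noncomputable def chi {d : ℕ} (pF : ℝ) (p : Fin d → ℤ) : ℝ := if zNorm p ≤ pF then 1 else 0

/-- The indicator `χ^⊥ = 1 − χ` of the complement of the Fermi ball. -/
noncomputable def chiP {d : ℕ} (pF : ℝ) (p : Fin d → ℤ) : ℝ := 1 - chi pF p

/-- The collision kernel `σ(p₁,p₂,p₃,p₄)`. -/
noncomputable def collisionKernel {d : ℕ} (pF : ℝ) (Vh : (Fin d → ℤ) → ℝ)
    (p₁ p₂ p₃ p₄ : Fin d → ℤ) : ℝ :=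
  (if p₁ + p₂ = p₃ + p₄ then 1 else 0) *
      (chi pF p₁ * chi pF p₂ * chi pF p₃ * chi pF p₄
        + chiP pF p₁ * chiP pF p₂ * chiP pF p₃ * chiP pF p₄) *
      (Vh (p₁ - p₄) - Vh (p₁ - p₃)) ^ 2
    + 2 * (if p₁ - p₂ = p₃ - p₄ then 1 else 0) *
      (chi pF p₁ * chi pF p₃ * chiP pF p₂ * chiP pF p₄
        + chiP pF p₁ * chiP pF p₃ * chi pF p₂ * chi pF p₄) *
      (Vh (p₁ - p₃)) ^ 2

/-- The signed free dispersion `e(q) = (χ^⊥(q) − χ(q))·|q|²/2`. -/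
noncomputable def freeDisp {d : ℕ} (pF : ℝ) (q : Fin d → ℤ) : ℝ :=
  (chiP pF q - chi pF q) * (zNorm q) ^ 2 / 2

/-- The limiting quantum Boltzmann collision operator `𝒬` on `ℤ³`. -/
noncomputable def Qop (pF : ℝ) (Vh f : (Fin 3 → ℤ) → ℝ) (p : Fin 3 → ℤ) : ℝ :=
  4 * π * ((2 * π) ^ 9)⁻¹ *
    ∑' (p₂ : Fin 3 → ℤ) (p₃ : Fin 3 → ℤ) (p₄ : Fin 3 → ℤ),
      collisionKernel pF Vh p p₂ p₃ p₄ * (1 / (2 * π)) *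
        (if freeDisp pF p + freeDisp pF p₂ - freeDisp pF p₃ - freeDisp pF p₄ = 0
          then 1 else 0) *
        (f p₃ * f p₄ * (1 - f p) * (1 - f p₂) - f p * f p₂ * (1 - f p₃) * (1 - f p₄))


/-! ### Auxiliary material -/

abbrev V3 := Fin 3 → ℤ

lemma ind_nonneg {c : Prop} [Decidable c] : (0:ℝ) ≤ if c then 1 else 0 := by
  split <;> norm_num

lemma ind_le_one {c : Prop} [Decidable c] : (if c then (1:ℝ) else 0) ≤ 1 := by
  split <;> norm_num

lemma chi_nonneg {d : ℕ} (pF : ℝ) (p : Fin d → ℤ) : 0 ≤ chi pF p := ind_nonneg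
lemma chi_le_one {d : ℕ} (pF : ℝ) (p : Fin d → ℤ) : chi pF p ≤ 1 := ind_le_one
lemma chiP_nonneg {d : ℕ} (pF : ℝ) (p : Fin d → ℤ) : 0 ≤ chiP pF p :=
  sub_nonneg.2 (chi_le_one pF p)
lemma chiP_le_one {d : ℕ} (pF : ℝ) (p : Fin d → ℤ) : chiP pF p ≤ 1 := by
  have := chi_nonneg pF p; simp only [chiP]; linarith

lemma mul4_le_snd {a b c d : ℝ} (ha0 : 0 ≤ a) (ha1 : a ≤ 1) (hb0 : 0 ≤ b)
    (hc0 : 0 ≤ c) (hc1 : c ≤ 1) (hd0 : 0 ≤ d) (hd1 : d ≤ 1) : a*b*c*d ≤ b := by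
  nlinarith [mul_nonneg (mul_nonneg ha0 hb0) hc0, mul_nonneg ha0 hb0]

lemma mul4_le_one {a b c d : ℝ} (ha0 : 0 ≤ a) (ha1 : a ≤ 1) (hb0 : 0 ≤ b) (hb1 : b ≤ 1)
    (hc0 : 0 ≤ c) (hc1 : c ≤ 1) (hd0 : 0 ≤ d) (hd1 : d ≤ 1) : a*b*c*d ≤ 1 := by
  nlinarith [mul_nonneg (mul_nonneg ha0 hb0) hc0, mul_nonneg ha0 hb0]

lemma mul4_nonneg {a b c d : ℝ} (ha : 0 ≤ a) (hb : 0 ≤ b) (hc : 0 ≤ c) (hd : 0 ≤ d) :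
    0 ≤ a*b*c*d := by positivity

lemma coord_le_zNorm (k : V3) (i : Fin 3) : |((k i : ℝ))| ≤ zNorm k := by
  rw [zNorm, ← Real.sqrt_sq_eq_abs]
  exact Real.sqrt_le_sqrt (Finset.single_le_sum (f := fun j => ((k j : ℝ))^2)
    (fun j _ => sq_nonneg _) (Finset.mem_univ i))

lemma sigma_le (M I₁ I₂ J₃ J₄ a b c₁ c₂ : ℝ)
    (hI₁0 : 0 ≤ I₁) (hI₂0 : 0 ≤ I₂)
    (hc₁0 : 0 ≤ c₁) (hc₁2 : c₁ ≤ 2) (hc₂0 : 0 ≤ c₂) (hc₂2 : c₂ ≤ 2)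
    (ha2 : a ^ 2 ≤ M * J₄) (hb2 : b ^ 2 ≤ M * J₃) :
    I₁ * c₁ * (a - b) ^ 2 + 2 * I₂ * c₂ * b ^ 2
      ≤ 4*M*(I₁*J₄) + 4*M*(I₁*J₃) + 4*M*(I₂*J₃) := by
  have k1 : (0:ℝ) ≤ (2 - c₁) * I₁ * (a - b)^2 :=
    mul_nonneg (mul_nonneg (by linarith) hI₁0) (sq_nonneg _)
  have k1' : (0:ℝ) ≤ I₁ * (a + b)^2 := mul_nonneg hI₁0 (sq_nonneg _)
  have h1 : I₁ * c₁ * (a - b) ^ 2 ≤ 4*(I₁*a^2) + 4*(I₁*b^2) := by nlinarith [k1, k1']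
  have k2 : (0:ℝ) ≤ (2 - c₂) * I₂ * b^2 :=
    mul_nonneg (mul_nonneg (by linarith) hI₂0) (sq_nonneg _)
  have h2 : 2 * I₂ * c₂ * b ^ 2 ≤ 4*(I₂*b^2) := by nlinarith [k2]
  have h3 : I₁ * a^2 ≤ M * (I₁ * J₄) := by
    have h := mul_le_mul_of_nonneg_left ha2 hI₁0; nlinarith [h]
  have h4 : I₁ * b^2 ≤ M * (I₁ * J₃) := by
    have h := mul_le_mul_of_nonneg_left hb2 hI₁0; nlinarith [h]
  have h5 : I₂ * b^2 ≤ M * (I₂ * J₃) := by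
    have h := mul_le_mul_of_nonneg_left hb2 hI₂0; nlinarith [h]
  linarith

lemma abs4_le (σ q δ br : ℝ) (hσ0 : 0 ≤ σ) (hq0 : 0 ≤ q) (hq1 : q ≤ 1)
    (hδ0 : 0 ≤ δ) (hδ1 : δ ≤ 1) : |σ * q * δ * br| ≤ σ * |br| := by
  rw [abs_mul, abs_mul, abs_mul, abs_of_nonneg hσ0, abs_of_nonneg hq0, abs_of_nonneg hδ0]
  have hq' : q * δ ≤ 1 := by nlinarith
  nlinarith [mul_nonneg (sub_nonneg.2 hq') (mul_nonneg hσ0 (abs_nonneg br))]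

lemma comb_le (s₁ s₂ s₃ w x y : ℝ) (hs₁ : 0 ≤ s₁) (hs₂ : 0 ≤ s₂) (hs₃ : 0 ≤ s₃)
    (hwx : w ≤ x) (hwy : w ≤ y) :
    (s₁ + s₂ + s₃) * w ≤ s₁ * x + s₂ * y + s₃ * y := by
  have h1 := mul_le_mul_of_nonneg_left hwx hs₁
  have h2 := mul_le_mul_of_nonneg_left hwy hs₂
  have h3 := mul_le_mul_of_nonneg_left hwy hs₃
  nlinarith [h1, h2, h3]

lemma core_bound (M I₁ I₂ J₃ J₄ δ a b c₁ c₂ q br x y : ℝ)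
    (hM : 1 ≤ M) (hI₁0 : 0 ≤ I₁) (hI₂0 : 0 ≤ I₂)
    (hJ₃0 : 0 ≤ J₃) (hJ₄0 : 0 ≤ J₄) (hδ0 : 0 ≤ δ) (hδ1 : δ ≤ 1)
    (hq0 : 0 ≤ q) (hq1 : q ≤ 1)
    (hc₁0 : 0 ≤ c₁) (hc₁2 : c₁ ≤ 2) (hc₂0 : 0 ≤ c₂) (hc₂2 : c₂ ≤ 2)
    (ha2 : a ^ 2 ≤ M * J₄) (hb2 : b ^ 2 ≤ M * J₃)
    (hbr3 : |br| ≤ x) (hbr4 : |br| ≤ y) :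
    |(I₁ * c₁ * (a - b) ^ 2 + 2 * I₂ * c₂ * b ^ 2) * q * δ * br|
      ≤ 4*M*(I₁*J₄*x + I₁*J₃*y + I₂*J₃*y) := by
  have hM0 : (0:ℝ) ≤ M := by linarith
  have hσ0 : 0 ≤ I₁ * c₁ * (a - b) ^ 2 + 2 * I₂ * c₂ * b ^ 2 := by positivity
  calc |(I₁ * c₁ * (a - b) ^ 2 + 2 * I₂ * c₂ * b ^ 2) * q * δ * br|
      ≤ (I₁ * c₁ * (a - b) ^ 2 + 2 * I₂ * c₂ * b ^ 2) * |br| :=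
        abs4_le _ _ _ _ hσ0 hq0 hq1 hδ0 hδ1
    _ ≤ (4*M*(I₁*J₄) + 4*M*(I₁*J₃) + 4*M*(I₂*J₃)) * |br| :=
        mul_le_mul_of_nonneg_right
          (sigma_le M I₁ I₂ J₃ J₄ a b c₁ c₂ hI₁0 hI₂0 hc₁0 hc₁2 hc₂0 hc₂2 ha2 hb2)
          (abs_nonneg br)
    _ ≤ (4*M*(I₁*J₄)) * x + (4*M*(I₁*J₃)) * y + (4*M*(I₂*J₃)) * y :=
        comb_le _ _ _ _ _ _ (by positivity) (by positivity) (by positivity) hbr3 hbr4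
    _ = 4*M*(I₁*J₄*x + I₁*J₃*y + I₂*J₃*y) := by ring

lemma br_le_bd {f : V3 → ℝ} (hf0 : ∀ q, 0 ≤ f q) (hf1 : ∀ q, f q ≤ 1) (p p₂ p₃ p₄ : V3) :
    |f p₃ * f p₄ * (1 - f p) * (1 - f p₂) - f p * f p₂ * (1 - f p₃) * (1 - f p₄)|
      ≤ f p₃ + f p₂ := by
  have hX : f p₃ * f p₄ * (1 - f p) * (1 - f p₂) ≤ f p₃ := by
    have h := mul4_le_snd (hf0 p₄) (hf1 p₄) (hf0 p₃) (sub_nonneg.2 (hf1 p))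
      (by linarith [hf0 p]) (sub_nonneg.2 (hf1 p₂)) (by linarith [hf0 p₂])
    nlinarith [h]
  have hX0 : 0 ≤ f p₃ * f p₄ * (1 - f p) * (1 - f p₂) :=
    mul4_nonneg (hf0 p₃) (hf0 p₄) (sub_nonneg.2 (hf1 p)) (sub_nonneg.2 (hf1 p₂))
  have hY : f p * f p₂ * (1 - f p₃) * (1 - f p₄) ≤ f p₂ :=
    mul4_le_snd (hf0 p) (hf1 p) (hf0 p₂) (sub_nonneg.2 (hf1 p₃)) (by linarith [hf0 p₃])
      (sub_nonneg.2 (hf1 p₄)) (by linarith [hf0 p₄])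
  have hY0 : 0 ≤ f p * f p₂ * (1 - f p₃) * (1 - f p₄) :=
    mul4_nonneg (hf0 p) (hf0 p₂) (sub_nonneg.2 (hf1 p₃)) (sub_nonneg.2 (hf1 p₄))
  rw [abs_le]; constructor <;> linarith [hf0 p₃, hf0 p₂]

lemma br_le_bd' {f : V3 → ℝ} (hf0 : ∀ q, 0 ≤ f q) (hf1 : ∀ q, f q ≤ 1) (p p₂ p₃ p₄ : V3) :
    |f p₃ * f p₄ * (1 - f p) * (1 - f p₂) - f p * f p₂ * (1 - f p₃) * (1 - f p₄)|
      ≤ f p₄ + f p₂ := by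
  have hX : f p₃ * f p₄ * (1 - f p) * (1 - f p₂) ≤ f p₄ :=
    mul4_le_snd (hf0 p₃) (hf1 p₃) (hf0 p₄) (sub_nonneg.2 (hf1 p))
      (by linarith [hf0 p]) (sub_nonneg.2 (hf1 p₂)) (by linarith [hf0 p₂])
  have hX0 : 0 ≤ f p₃ * f p₄ * (1 - f p) * (1 - f p₂) :=
    mul4_nonneg (hf0 p₃) (hf0 p₄) (sub_nonneg.2 (hf1 p)) (sub_nonneg.2 (hf1 p₂))
  have hY : f p * f p₂ * (1 - f p₃) * (1 - f p₄) ≤ f p₂ :=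
    mul4_le_snd (hf0 p) (hf1 p) (hf0 p₂) (sub_nonneg.2 (hf1 p₃)) (by linarith [hf0 p₃])
      (sub_nonneg.2 (hf1 p₄)) (by linarith [hf0 p₄])
  have hY0 : 0 ≤ f p * f p₂ * (1 - f p₃) * (1 - f p₄) :=
    mul4_nonneg (hf0 p) (hf0 p₂) (sub_nonneg.2 (hf1 p₃)) (sub_nonneg.2 (hf1 p₄))
  rw [abs_le]; constructor <;> linarith [hf0 p₄, hf0 p₂]

lemma pointwise_bound (pF : ℝ) (Vh f : V3 → ℝ) (M : ℝ) (B : Finset V3)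
    (hVh : ∀ k, (Vh k) ^ 2 ≤ M * (if k ∈ B then 1 else 0)) (hM : 1 ≤ M)
    (hf0 : ∀ q, 0 ≤ f q) (hf1 : ∀ q, f q ≤ 1) (p p₂ p₃ p₄ : V3) :
    |collisionKernel pF Vh p p₂ p₃ p₄ * (1 / (2 * π)) *
        (if freeDisp pF p + freeDisp pF p₂ - freeDisp pF p₃ - freeDisp pF p₄ = 0
          then 1 else 0) *
        (f p₃ * f p₄ * (1 - f p) * (1 - f p₂) - f p * f p₂ * (1 - f p₃) * (1 - f p₄))|
      ≤ 4*M*((if p + p₂ = p₃ + p₄ then (1:ℝ) else 0) * (if p - p₄ ∈ B then 1 else 0) * (f p₃ + f p₂)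
          + (if p + p₂ = p₃ + p₄ then (1:ℝ) else 0) * (if p - p₃ ∈ B then 1 else 0) * (f p₄ + f p₂)
          + (if p - p₂ = p₃ - p₄ then (1:ℝ) else 0) * (if p - p₃ ∈ B then 1 else 0) * (f p₄ + f p₂)) := by
  have hpi : (1:ℝ) ≤ 2 * π := by nlinarith [Real.pi_gt_three]
  have hc₁2 : chi pF p * chi pF p₂ * chi pF p₃ * chi pF p₄
      + chiP pF p * chiP pF p₂ * chiP pF p₃ * chiP pF p₄ ≤ 2 := by
    have h1 := mul4_le_one (chi_nonneg pF p) (chi_le_one pF p) (chi_nonneg pF p₂)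
      (chi_le_one pF p₂) (chi_nonneg pF p₃) (chi_le_one pF p₃) (chi_nonneg pF p₄) (chi_le_one pF p₄)
    have h2 := mul4_le_one (chiP_nonneg pF p) (chiP_le_one pF p) (chiP_nonneg pF p₂)
      (chiP_le_one pF p₂) (chiP_nonneg pF p₃) (chiP_le_one pF p₃) (chiP_nonneg pF p₄)
      (chiP_le_one pF p₄)
    linarith
  have hc₂2 : chi pF p * chi pF p₃ * chiP pF p₂ * chiP pF p₄
      + chiP pF p * chiP pF p₃ * chi pF p₂ * chi pF p₄ ≤ 2 := by
    have h1 := mul4_le_one (chi_nonneg pF p) (chi_le_one pF p) (chi_nonneg pF p₃)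
      (chi_le_one pF p₃) (chiP_nonneg pF p₂) (chiP_le_one pF p₂) (chiP_nonneg pF p₄)
      (chiP_le_one pF p₄)
    have h2 := mul4_le_one (chiP_nonneg pF p) (chiP_le_one pF p) (chiP_nonneg pF p₃)
      (chiP_le_one pF p₃) (chi_nonneg pF p₂) (chi_le_one pF p₂) (chi_nonneg pF p₄)
      (chi_le_one pF p₄)
    linarith
  rw [collisionKernel]
  exact core_bound M _ _ _ _ _ (Vh (p - p₄)) (Vh (p - p₃)) _ _ (1 / (2 * π)) _
    (f p₃ + f p₂) (f p₄ + f p₂) hM ind_nonneg ind_nonneg ind_nonneg ind_nonneg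
    ind_nonneg ind_le_one (by positivity) (by rw [div_le_one (by linarith)]; linarith)
    (add_nonneg
      (mul4_nonneg (chi_nonneg _ _) (chi_nonneg _ _) (chi_nonneg _ _) (chi_nonneg _ _))
      (mul4_nonneg (chiP_nonneg _ _) (chiP_nonneg _ _) (chiP_nonneg _ _) (chiP_nonneg _ _)))
    hc₁2
    (add_nonneg
      (mul4_nonneg (chi_nonneg _ _) (chi_nonneg _ _) (chiP_nonneg _ _) (chiP_nonneg _ _))
      (mul4_nonneg (chiP_nonneg _ _) (chiP_nonneg _ _) (chi_nonneg _ _) (chi_nonneg _ _)))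
    hc₂2 (hVh (p - p₄)) (hVh (p - p₃))
    (br_le_bd hf0 hf1 p p₂ p₃ p₄) (br_le_bd' hf0 hf1 p p₂ p₃ p₄)

section reindex
variable {f : V3 → ℝ} (B : Finset V3) (p : V3)

lemma slice_summable (hfs : Summable f) (u : V3) : Summable (fun q => f (q + u)) := by
  have := (Equiv.addRight u).summable_iff (f := f)
  exact this.mpr hfs

lemma slice_tsum (u : V3) : ∑' q, f (q + u) = ∑' q, f q := by
  have := (Equiv.addRight u).tsum_eq (f := f)
  simpa [Function.comp] using this

lemma hfun_slice_summable (hfs : Summable f) (u : V3) :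
    Summable (fun q => (if u ∈ B then (1:ℝ) else 0) * (f (q + u) + f q)) :=
  ((slice_summable hfs u).add hfs).mul_left _

lemma hfun_slice_tsum (hfs : Summable f) (u : V3) :
    ∑' q, (if u ∈ B then (1:ℝ) else 0) * (f (q + u) + f q)
      = (if u ∈ B then (1:ℝ) else 0) * (2 * ∑' q, f q) := by
  rw [tsum_mul_left, Summable.tsum_add (slice_summable hfs u) hfs, slice_tsum, two_mul]

lemma hfun_summable (hf0 : ∀ q, 0 ≤ f q) (hfs : Summable f) :
    Summable (fun y : V3 × V3 => (if y.1 ∈ B then (1:ℝ) else 0) * (f (y.2 + y.1) + f y.2)) := by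
  apply (summable_prod_of_nonneg ?_).mpr
  constructor
  · exact fun u => hfun_slice_summable B hfs u
  · apply Summable.congr (f := fun u => (if u ∈ B then (1:ℝ) else 0) * (2 * ∑' q, f q))
    · exact summable_of_ne_finset_zero (s := B) (fun u hu => by simp [hu])
    · exact fun u => (hfun_slice_tsum B hfs u).symm
  · intro y
    have h1 := hf0 (y.2 + y.1); have h2 := hf0 y.2
    have h3 : (0:ℝ) ≤ if y.1 ∈ B then (1:ℝ) else 0 := by split <;> norm_num
    positivity

lemma hfun_tsum (hf0 : ∀ q, 0 ≤ f q) (hfs : Summable f) :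
    ∑' y : V3 × V3, (if y.1 ∈ B then (1:ℝ) else 0) * (f (y.2 + y.1) + f y.2)
      = (B.card : ℝ) * (2 * ∑' q, f q) := by
  rw [Summable.tsum_prod' (hfun_summable B hf0 hfs) (fun u => hfun_slice_summable B hfs u)]
  calc ∑' (u : V3), ∑' (q : V3), (if u ∈ B then (1:ℝ) else 0) * (f (q + u) + f q)
      = ∑' (u : V3), (if u ∈ B then (1:ℝ) else 0) * (2 * ∑' q, f q) :=
        tsum_congr fun u => hfun_slice_tsum B hfs u
    _ = ∑ u ∈ B, (if u ∈ B then (1:ℝ) else 0) * (2 * ∑' q, f q) :=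
        tsum_eq_sum (fun u hu => by simp [hu])
    _ = ∑ u ∈ B, (2 * ∑' q, f q) := Finset.sum_congr rfl (fun u hu => by simp [hu])
    _ = (B.card : ℝ) * (2 * ∑' q, f q) := by rw [Finset.sum_const, nsmul_eq_mul]

/-- piece 1 -/
noncomputable def Hp1 (B : Finset V3) (f : V3 → ℝ) (p : V3) (x : V3 × V3 × V3) : ℝ :=
  (if p + x.1 = x.2.1 + x.2.2 then (1:ℝ) else 0) * (if p - x.2.2 ∈ B then 1 else 0)
    * (f x.2.1 + f x.1)

noncomputable def Hp2 (B : Finset V3) (f : V3 → ℝ) (p : V3) (x : V3 × V3 × V3) : ℝ :=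
  (if p + x.1 = x.2.1 + x.2.2 then (1:ℝ) else 0) * (if p - x.2.1 ∈ B then 1 else 0)
    * (f x.2.2 + f x.1)

noncomputable def Hp3 (B : Finset V3) (f : V3 → ℝ) (p : V3) (x : V3 × V3 × V3) : ℝ :=
  (if p - x.1 = x.2.1 - x.2.2 then (1:ℝ) else 0) * (if p - x.2.1 ∈ B then 1 else 0)
    * (f x.2.2 + f x.1)

lemma vec_eq {a b : V3} (h : ∀ i, a i = b i) : a = b := funext h

lemma Hp1_comp :
    (fun y : V3 × V3 => Hp1 B f p (y.2, y.2 + y.1, p - y.1))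
      = fun y : V3 × V3 => (if y.1 ∈ B then (1:ℝ) else 0) * (f (y.2 + y.1) + f y.2) := by
  funext y
  have h1 : p + y.2 = (y.2 + y.1) + (p - y.1) := by abel
  have h2 : p - (p - y.1) = y.1 := by abel
  simp only [Hp1, h2, if_pos h1, one_mul]

lemma Hp1_inj : Function.Injective (fun y : V3 × V3 => ((y.2, y.2 + y.1, p - y.1) : V3 × V3 × V3)) := by
  intro y z h
  have h1 : y.2 = z.2 := congrArg Prod.fst h
  have h3 : p - y.1 = p - z.1 := congrArg (fun t : V3 × V3 × V3 => t.2.2) h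
  have h4 : y.1 = z.1 := by
    have := sub_right_injective h3; exact this
  exact Prod.ext h4 h1

lemma Hp1_supp (x : V3 × V3 × V3)
    (hx : x ∉ Set.range (fun y : V3 × V3 => ((y.2, y.2 + y.1, p - y.1) : V3 × V3 × V3))) :
    Hp1 B f p x = 0 := by
  obtain ⟨p₂, p₃, p₄⟩ := x
  by_cases h : p + p₂ = p₃ + p₄
  · exfalso
    apply hx
    refine ⟨(p - p₄, p₂), ?_⟩
    have e2 : p₂ + (p - p₄) = p₃ := by
      funext i
      have hi := congrFun h i
      simp only [Pi.add_apply, Pi.sub_apply] at hi ⊢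
      omega
    have e3 : p - (p - p₄) = p₄ := by abel
    simp only [e2, e3]
  · simp [Hp1, h]

lemma Hp1_summable (hf0 : ∀ q, 0 ≤ f q) (hfs : Summable f) : Summable (Hp1 B f p) := by
  rw [← Function.Injective.summable_iff (Hp1_inj p) (fun x hx => Hp1_supp B p x hx)]
  apply Summable.congr (hfun_summable B hf0 hfs)
  intro y
  exact (congrFun (Hp1_comp B p) y).symm

lemma Hp1_tsum (hf0 : ∀ q, 0 ≤ f q) (hfs : Summable f) :
    ∑' x, Hp1 B f p x = (B.card : ℝ) * (2 * ∑' q, f q) := by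
  rw [← Function.Injective.tsum_eq (Hp1_inj p)
    (Function.support_subset_iff'.2 (fun x hx => Hp1_supp B p x hx))]
  rw [show (fun y : V3 × V3 => Hp1 B f p (y.2, y.2 + y.1, p - y.1))
      = fun y : V3 × V3 => (if y.1 ∈ B then (1:ℝ) else 0) * (f (y.2 + y.1) + f y.2)
    from Hp1_comp B p]
  exact hfun_tsum B hf0 hfs

lemma Hp2_comp :
    (fun y : V3 × V3 => Hp2 B f p (y.2, p - y.1, y.2 + y.1))
      = fun y : V3 × V3 => (if y.1 ∈ B then (1:ℝ) else 0) * (f (y.2 + y.1) + f y.2) := by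
  funext y
  have h1 : p + y.2 = (p - y.1) + (y.2 + y.1) := by abel
  have h2 : p - (p - y.1) = y.1 := by abel
  simp only [Hp2, h2, if_pos h1, one_mul]

lemma Hp2_inj : Function.Injective (fun y : V3 × V3 => ((y.2, p - y.1, y.2 + y.1) : V3 × V3 × V3)) := by
  intro y z h
  have h1 : y.2 = z.2 := congrArg Prod.fst h
  have h3 : p - y.1 = p - z.1 := congrArg (fun t : V3 × V3 × V3 => t.2.1) h
  exact Prod.ext (sub_right_injective h3) h1

lemma Hp2_supp (x : V3 × V3 × V3)
    (hx : x ∉ Set.range (fun y : V3 × V3 => ((y.2, p - y.1, y.2 + y.1) : V3 × V3 × V3))) :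
    Hp2 B f p x = 0 := by
  obtain ⟨p₂, p₃, p₄⟩ := x
  by_cases h : p + p₂ = p₃ + p₄
  · exfalso
    apply hx
    refine ⟨(p - p₃, p₂), ?_⟩
    have e2 : p - (p - p₃) = p₃ := by abel
    have e3 : p₂ + (p - p₃) = p₄ := by
      funext i
      have hi := congrFun h i
      simp only [Pi.add_apply, Pi.sub_apply] at hi ⊢
      omega
    simp only [e2, e3]
  · simp [Hp2, h]

lemma Hp2_summable (hf0 : ∀ q, 0 ≤ f q) (hfs : Summable f) : Summable (Hp2 B f p) := by
  rw [← Function.Injective.summable_iff (Hp2_inj p) (fun x hx => Hp2_supp B p x hx)]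
  apply Summable.congr (hfun_summable B hf0 hfs)
  intro y
  exact (congrFun (Hp2_comp B p) y).symm

lemma Hp2_tsum (hf0 : ∀ q, 0 ≤ f q) (hfs : Summable f) :
    ∑' x, Hp2 B f p x = (B.card : ℝ) * (2 * ∑' q, f q) := by
  rw [← Function.Injective.tsum_eq (Hp2_inj p)
    (Function.support_subset_iff'.2 (fun x hx => Hp2_supp B p x hx))]
  rw [show (fun y : V3 × V3 => Hp2 B f p (y.2, p - y.1, y.2 + y.1))
      = fun y : V3 × V3 => (if y.1 ∈ B then (1:ℝ) else 0) * (f (y.2 + y.1) + f y.2)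
    from Hp2_comp B p]
  exact hfun_tsum B hf0 hfs

lemma Hp3_comp :
    (fun y : V3 × V3 => Hp3 B f p (y.2 + y.1, p - y.1, y.2))
      = fun y : V3 × V3 => (if y.1 ∈ B then (1:ℝ) else 0) * (f (y.2 + y.1) + f y.2) := by
  funext y
  have h1 : p - (y.2 + y.1) = (p - y.1) - y.2 := by abel
  have h2 : p - (p - y.1) = y.1 := by abel
  simp only [Hp3, h2, if_pos h1, one_mul, add_comm (f y.2) (f (y.2 + y.1))]

lemma Hp3_inj : Function.Injective (fun y : V3 × V3 => ((y.2 + y.1, p - y.1, y.2) : V3 × V3 × V3)) := by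
  intro y z h
  have h1 : y.2 = z.2 := congrArg (fun t : V3 × V3 × V3 => t.2.2) h
  have h3 : p - y.1 = p - z.1 := congrArg (fun t : V3 × V3 × V3 => t.2.1) h
  exact Prod.ext (sub_right_injective h3) h1

lemma Hp3_supp (x : V3 × V3 × V3)
    (hx : x ∉ Set.range (fun y : V3 × V3 => ((y.2 + y.1, p - y.1, y.2) : V3 × V3 × V3))) :
    Hp3 B f p x = 0 := by
  obtain ⟨p₂, p₃, p₄⟩ := x
  by_cases h : p - p₂ = p₃ - p₄
  · exfalso
    apply hx
    refine ⟨(p - p₃, p₄), ?_⟩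
    have e1 : p₄ + (p - p₃) = p₂ := by
      funext i
      have hi := congrFun h i
      simp only [Pi.sub_apply, Pi.add_apply] at hi ⊢
      omega
    have e2 : p - (p - p₃) = p₃ := by abel
    simp only [e1, e2]
  · simp [Hp3, h]

lemma Hp3_summable (hf0 : ∀ q, 0 ≤ f q) (hfs : Summable f) : Summable (Hp3 B f p) := by
  rw [← Function.Injective.summable_iff (Hp3_inj p) (fun x hx => Hp3_supp B p x hx)]
  apply Summable.congr (hfun_summable B hf0 hfs)
  intro y
  exact (congrFun (Hp3_comp B p) y).symm

lemma Hp3_tsum (hf0 : ∀ q, 0 ≤ f q) (hfs : Summable f) :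
    ∑' x, Hp3 B f p x = (B.card : ℝ) * (2 * ∑' q, f q) := by
  rw [← Function.Injective.tsum_eq (Hp3_inj p)
    (Function.support_subset_iff'.2 (fun x hx => Hp3_supp B p x hx))]
  rw [show (fun y : V3 × V3 => Hp3 B f p (y.2 + y.1, p - y.1, y.2))
      = fun y : V3 × V3 => (if y.1 ∈ B then (1:ℝ) else 0) * (f (y.2 + y.1) + f y.2)
    from Hp3_comp B p]
  exact hfun_tsum B hf0 hfs

end reindex

set_option maxHeartbeats 2000000 in
/-- Upper bound for `𝒬`: for `r ≥ 1` and `V̂` supported in the ball of radius `r`, even,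
with `V̂(0) = 0`, there is `C > 0` such that for every `p_F > 0` and every `f : ℤ³ → ℝ`
with `0 ≤ f ≤ 1` and `∑ f < ∞`, one has `sup_p |𝒬[f](p)| ≤ C·∑_p f(p)`. -/
theorem stmt10 (r : ℝ) (hr : 1 ≤ r) (Vh : (Fin 3 → ℤ) → ℝ)
    (hsupp : ∀ k, r < zNorm k → Vh k = 0) (hsymm : ∀ k, Vh (-k) = Vh k) (h0 : Vh 0 = 0) :
    ∃ C : ℝ, 0 < C ∧ ∀ pF : ℝ, 0 < pF → ∀ f : (Fin 3 → ℤ) → ℝ,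
      (∀ p, 0 ≤ f p) → (∀ p, f p ≤ 1) → Summable f →
      ∀ p : Fin 3 → ℤ, |Qop pF Vh f p| ≤ C * ∑' q : Fin 3 → ℤ, f q := by
  classical
  set R : ℤ := ⌈r⌉ with hR
  set B : Finset V3 := Finset.Icc (fun _ => -R) (fun _ => R) with hB
  have hrR : r ≤ (R:ℝ) := Int.le_ceil r
  have hkB : ∀ k : V3, zNorm k ≤ r → k ∈ B := by
    intro k hk
    rw [hB, Finset.mem_Icc]
    constructor <;> (intro i)
    · have h := coord_le_zNorm k i
      have h2 : |(k i : ℝ)| ≤ (R:ℝ) := le_trans h (le_trans hk hrR)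
      rw [abs_le] at h2
      have := h2.1
      simp only [Pi.neg_apply]
      exact_mod_cast this
    · have h := coord_le_zNorm k i
      have h2 : |(k i : ℝ)| ≤ (R:ℝ) := le_trans h (le_trans hk hrR)
      rw [abs_le] at h2
      exact_mod_cast h2.2
  set M : ℝ := 1 + ∑ k ∈ B, (Vh k)^2 with hM
  have hsum0 : 0 ≤ ∑ k ∈ B, (Vh k)^2 := Finset.sum_nonneg (fun _ _ => sq_nonneg _)
  have hM1 : 1 ≤ M := by rw [hM]; linarith
  have hM0 : 0 < M := by linarith
  have hVhB : ∀ k, (Vh k)^2 ≤ M * (if k ∈ B then 1 else 0) := by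
    intro k
    by_cases hk : k ∈ B
    · rw [if_pos hk, mul_one]
      have h : (Vh k)^2 ≤ ∑ j ∈ B, (Vh j)^2 :=
        Finset.single_le_sum (f := fun j => (Vh j)^2) (fun j _ => sq_nonneg _) hk
      rw [hM]; linarith
    · rw [if_neg hk, mul_zero]
      have hz : Vh k = 0 := by
        apply hsupp
        by_contra hcon
        push_neg at hcon
        exact hk (hkB k hcon)
      rw [hz]; norm_num
  have hNpos : 0 < (B.card : ℝ) := by
    have h0 : (0:V3) ∈ B := by
      rw [hB, Finset.mem_Icc]
      have hR1 : (1:ℤ) ≤ R := by exact_mod_cast (le_trans hr hrR)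
      constructor <;> intro i <;> simp only [Pi.neg_apply, Pi.zero_apply] <;> omega
    have := Finset.card_pos.mpr ⟨0, h0⟩
    exact_mod_cast this
  refine ⟨4*π*((2*π)^9)⁻¹ * (24 * M * (B.card : ℝ)), by positivity, ?_⟩
  intro pF hpF f hf0 hf1 hfs p
  set S := ∑' q, f q with hS
  set F : V3 × V3 × V3 → ℝ := fun x =>
    collisionKernel pF Vh p x.1 x.2.1 x.2.2 * (1 / (2 * π)) *
      (if freeDisp pF p + freeDisp pF x.1 - freeDisp pF x.2.1 - freeDisp pF x.2.2 = 0
        then 1 else 0) *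
      (f x.2.1 * f x.2.2 * (1 - f p) * (1 - f x.1)
        - f p * f x.1 * (1 - f x.2.1) * (1 - f x.2.2)) with hF
  have hptw : ∀ x, |F x| ≤ 4*M*(Hp1 B f p x + Hp2 B f p x + Hp3 B f p x) := by
    intro x
    have h := pointwise_bound pF Vh f M B hVhB hM1 hf0 hf1 p x.1 x.2.1 x.2.2
    simpa only [Hp1, Hp2, Hp3, hF] using h
  have hHsum : Summable (fun x => 4*M*(Hp1 B f p x + Hp2 B f p x + Hp3 B f p x)) :=
    (((Hp1_summable B p hf0 hfs).add (Hp2_summable B p hf0 hfs)).add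
      (Hp3_summable B p hf0 hfs)).mul_left _
  have hFabs : Summable (fun x => |F x|) :=
    Summable.of_nonneg_of_le (fun x => abs_nonneg _) hptw hHsum
  have hFsum : Summable F := summable_abs_iff.mp hFabs
  have hHtsum : ∑' x, 4*M*(Hp1 B f p x + Hp2 B f p x + Hp3 B f p x)
      = 24 * M * (B.card : ℝ) * S := by
    rw [tsum_mul_left,
      Summable.tsum_add ((Hp1_summable B p hf0 hfs).add (Hp2_summable B p hf0 hfs))
        (Hp3_summable B p hf0 hfs),
      Summable.tsum_add (Hp1_summable B p hf0 hfs) (Hp2_summable B p hf0 hfs),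
      Hp1_tsum B p hf0 hfs, Hp2_tsum B p hf0 hfs, Hp3_tsum B p hf0 hfs, ← hS]
    ring
  have hbound : |∑' x, F x| ≤ 24 * M * (B.card : ℝ) * S := by
    calc |∑' x, F x| ≤ ∑' x, |F x| := by
          simpa only [Real.norm_eq_abs] using
            norm_tsum_le_tsum_norm (f := F) (by simpa only [Real.norm_eq_abs] using hFabs)
      _ ≤ ∑' x, 4*M*(Hp1 B f p x + Hp2 B f p x + Hp3 B f p x) :=
          Summable.tsum_le_tsum hptw hFabs hHsum
      _ = 24 * M * (B.card : ℝ) * S := hHtsum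
  have hiter : ∑' x : V3 × V3 × V3, F x
      = ∑' (p₂ : Fin 3 → ℤ) (p₃ : Fin 3 → ℤ) (p₄ : Fin 3 → ℤ),
          collisionKernel pF Vh p p₂ p₃ p₄ * (1 / (2 * π)) *
            (if freeDisp pF p + freeDisp pF p₂ - freeDisp pF p₃ - freeDisp pF p₄ = 0
              then 1 else 0) *
            (f p₃ * f p₄ * (1 - f p) * (1 - f p₂)
              - f p * f p₂ * (1 - f p₃) * (1 - f p₄)) := by
    rw [Summable.tsum_prod' hFsum (fun b => hFsum.prod_factor b)]
    exact tsum_congr fun b =>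
      Summable.tsum_prod' (hFsum.prod_factor b) (fun c => (hFsum.prod_factor b).prod_factor c)
  have hQeq : Qop pF Vh f p = 4 * π * ((2 * π) ^ 9)⁻¹ * ∑' x : V3 × V3 × V3, F x := by
    rw [Qop, hiter]
  rw [hQeq, abs_mul, abs_of_nonneg (by positivity : (0:ℝ) ≤ 4 * π * ((2 * π) ^ 9)⁻¹)]
  calc 4 * π * ((2 * π) ^ 9)⁻¹ * |∑' x : V3 × V3 × V3, F x|
      ≤ 4 * π * ((2 * π) ^ 9)⁻¹ * (24 * M * (B.card : ℝ) * S) :=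
        mul_le_mul_of_nonneg_left hbound (by positivity)
    _ = 4*π*((2*π)^9)⁻¹ * (24 * M * (B.card : ℝ)) * S := by ring
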